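/- For any nonnegative integers α, n, m, letting G be geometric on {0,1,2,...} with parameter 1-q and B_k Binomial(k,p) independent of G, the ratio Pr(G+B_n=α)/Pr(G+B_{n+m}=α) is at most (1/(1-p))^m. -/

import Mathlib

open Finset

/-- pmf of a geometric distribution on {0,1,2,...} with success parameter `1-q`. -/
noncomputable def geomPMF (q : ℝ) (k : ℕ) : ℝ := q ^ k * (1 - q)

/-- pmf of a Bernoulli distribution with parameter `p`. -/
noncomputable def bernPMF (p : ℝ) (k : ℕ) : ℝ :=
  if k = 0 then 1 - p else if k = 1 then p else 0

/-- pmf of a Binomial(n, p) distribution. -/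
noncomputable def binomPMF (n : ℕ) (p : ℝ) (k : ℕ) : ℝ :=
  (n.choose k : ℝ) * p ^ k * (1 - p) ^ (n - k)

/-- pmf of the sum of two independent random variables with pmfs `f` and `g`. -/
noncomputable def convPMF (f g : ℕ → ℝ) (α : ℕ) : ℝ :=
  ∑ k ∈ Finset.range (α + 1), f k * g (α - k)

theorem geom_binom_add_ratio_lower (p q : ℝ) (hp0 : 0 < p) (hp1 : p < 1)
    (hq0 : 0 < q) (hq1 : q < 1) (α n m : ℕ) :
    convPMF (geomPMF q) (binomPMF n p) α / convPMF (geomPMF q) (binomPMF (n + m) p) α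
      ≤ (1 / (1 - p)) ^ m := by
  have hp' : (0:ℝ) < 1 - p := by linarith
  have hq' : (0:ℝ) < 1 - q := by linarith
  have hbnn : ∀ N j, 0 ≤ binomPMF N p j := fun N j => by
    unfold binomPMF; positivity
  have hgnn : ∀ k, 0 ≤ geomPMF q k := fun k => by
    unfold geomPMF; positivity
  have hkey : ∀ j, binomPMF n p j * (1 - p) ^ m ≤ binomPMF (n + m) p j := by
    intro j
    by_cases hj : j ≤ n
    · unfold binomPMF
      have h1 : n + m - j = (n - j) + m := by omega
      rw [h1, pow_add, ← mul_assoc]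
      gcongr
      exact Nat.le_add_right n m
    · have : binomPMF n p j = 0 := by
        unfold binomPMF
        rw [Nat.choose_eq_zero_of_lt (by omega)]
        simp
      rw [this, zero_mul]
      exact hbnn _ _
  have hden : 0 < convPMF (geomPMF q) (binomPMF (n + m) p) α := by
    unfold convPMF
    apply Finset.sum_pos'
    · intro k _; exact mul_nonneg (hgnn k) (hbnn _ _)
    · refine ⟨α, Finset.self_mem_range_succ α, ?_⟩
      simp only [Nat.sub_self]
      unfold geomPMF binomPMF
      simp only [Nat.choose_zero_right, Nat.sub_zero, pow_zero]
      positivity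
  have hmain : convPMF (geomPMF q) (binomPMF n p) α * (1 - p) ^ m
      ≤ convPMF (geomPMF q) (binomPMF (n + m) p) α := by
    unfold convPMF
    rw [Finset.sum_mul]
    apply Finset.sum_le_sum
    intro k _
    rw [mul_assoc]
    exact mul_le_mul_of_nonneg_left (hkey _) (hgnn k)
  rw [div_le_iff₀ hden, one_div, inv_pow, ← div_le_iff₀' (by positivity), div_eq_mul_inv,
    inv_inv]
  exact hmain
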